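/- arXiv:2401.02249 — 3 statements merged into one kernel-verified Lean document; each statement's English description precedes it below -/
import Mathlib

section
/- Let d ≥ 1, let Ω ⊆ ℝ^d be open and bounded, let v : ℝ^d → ℝ be continuously differentiable with compact support, and let X, X̃ : Ω → ℝ^d be differentiable maps with sup_{x∈Ω} |X(x) − X̃(x)| ≤ ε. Suppose there is κ > 0 such that for every α ∈ [0,1] the map H_α(x) = X(x) + α·(X̃(x) − X(x)) is injective on Ω and satisfies |det DH_α(x)| ≥ κ for every x ∈ Ω. Then ∫_Ω |v(X(x)) − v(X̃(x))|² dx ≤ ε²·κ^{−1}·∫_{ℝ^d} |∇v(y)|² dy. -/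
open Set MeasureTheory

open scoped ENNReal NNReal

lemma aux_sq_lintegral {α : Type*} [MeasurableSpace α] (μ : Measure α) (hμ : μ Set.univ = 1)
    {f : α → ℝ≥0∞} (hf : AEMeasurable f μ) :
    (∫⁻ a, f a ∂μ) ^ 2 ≤ ∫⁻ a, (f a) ^ 2 ∂μ := by
  have hconj : Real.HolderConjugate 2 2 := Real.holderConjugate_iff.mpr ⟨by norm_num, by norm_num⟩
  have h := ENNReal.lintegral_mul_le_Lp_mul_Lq μ hconj hf aemeasurable_const (g := fun _ => 1)
  simp only [Pi.mul_apply, mul_one, ENNReal.one_rpow, lintegral_const, hμ, one_mul,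
    ENNReal.one_rpow] at h
  have h2 : ∀ a, f a ^ (2:ℝ) = f a ^ (2:ℕ) := fun a => ENNReal.rpow_natCast (f a) 2
  simp only [h2] at h
  calc (∫⁻ a, f a ∂μ) ^ 2 ≤ ((∫⁻ a, f a ^ 2 ∂μ) ^ ((1:ℝ)/2)) ^ 2 := pow_le_pow_left' h 2
    _ = ∫⁻ a, f a ^ 2 ∂μ := by
        rw [← ENNReal.rpow_natCast (_ ^ ((1:ℝ)/2)) 2, ← ENNReal.rpow_mul]
        norm_num

lemma aux_key2 {D ε : ℝ} (hε0 : 0 ≤ ε) {φ : ℝ → ℝ} (hφc : Continuous φ)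
    (hφ0 : ∀ t, 0 ≤ φ t) (hD : |D| ≤ ∫ t in (0:ℝ)..1, ε * φ t) :
    ENNReal.ofReal (|D| ^ 2) ≤
      ENNReal.ofReal ε ^ 2 * ∫⁻ t in Set.Ioc (0:ℝ) 1, ENNReal.ofReal (φ t ^ 2) := by
  have hμ1 : (volume.restrict (Set.Ioc (0:ℝ) 1)) Set.univ = 1 := by
    simp [Real.volume_Ioc]
  have hφm : AEMeasurable (fun t => ENNReal.ofReal (φ t)) (volume.restrict (Set.Ioc (0:ℝ) 1)) :=
    (ENNReal.measurable_ofReal.comp hφc.measurable).aemeasurable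
  have hI : ∫ t in (0:ℝ)..1, ε * φ t = ∫ t in Set.Ioc (0:ℝ) 1, ε * φ t :=
    intervalIntegral.integral_of_le zero_le_one
  have hint : IntegrableOn (fun t => ε * φ t) (Set.Ioc (0:ℝ) 1) :=
    (continuous_const.mul hφc).integrableOn_Ioc
  have hofI : ENNReal.ofReal (∫ t in Set.Ioc (0:ℝ) 1, ε * φ t)
      = ∫⁻ t in Set.Ioc (0:ℝ) 1, ENNReal.ofReal (ε * φ t) :=
    ofReal_integral_eq_lintegral_ofReal hint
      (Filter.Eventually.of_forall fun t => mul_nonneg hε0 (hφ0 t))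
  have hInn : (0:ℝ) ≤ ∫ t in (0:ℝ)..1, ε * φ t :=
    intervalIntegral.integral_nonneg zero_le_one fun t _ => mul_nonneg hε0 (hφ0 t)
  have h1 : ENNReal.ofReal (|D| ^ 2) ≤ (ENNReal.ofReal (∫ t in (0:ℝ)..1, ε * φ t)) ^ 2 := by
    rw [← ENNReal.ofReal_pow hInn]
    exact ENNReal.ofReal_le_ofReal (pow_le_pow_left₀ (abs_nonneg D) hD 2)
  refine h1.trans ?_
  rw [hI, hofI]
  have hsplit : ∀ t, ENNReal.ofReal (ε * φ t) = ENNReal.ofReal ε * ENNReal.ofReal (φ t) :=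
    fun t => ENNReal.ofReal_mul hε0
  simp only [hsplit]
  rw [lintegral_const_mul' _ _ ENNReal.ofReal_ne_top, mul_pow]
  refine mul_le_mul_right ?_ _
  refine (aux_sq_lintegral _ hμ1 hφm).trans ?_
  refine le_of_eq (lintegral_congr fun t => ?_)
  rw [← ENNReal.ofReal_pow (hφ0 t)]

set_option maxHeartbeats 2000000 in
/-- **L² estimate for the difference of compositions with two nearby flow maps.**
If `v` is `C¹` with compact support, `X` and `Xt = X̃` are differentiable on the bounded
open set `Ω` with `sup_Ω ‖X − X̃‖ ≤ ε`, and every interpolated map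
`H_α = X + α(X̃ − X)` (`α ∈ [0,1]`) is injective on `Ω` with Jacobian determinant of
absolute value `≥ κ > 0`, then
`∫_Ω |v(X x) − v(X̃ x)|² dx ≤ ε²·κ⁻¹·∫_{ℝ^d} |∇v(y)|² dy`. -/
theorem sq_integral_comp_flow_difference_le
    {d : ℕ} (hd : 1 ≤ d) (Ω : Set (EuclideanSpace ℝ (Fin d)))
    (hΩo : IsOpen Ω) (hΩb : Bornology.IsBounded Ω)
    (v : EuclideanSpace ℝ (Fin d) → ℝ)
    (hv : ContDiff ℝ 1 v) (hvsupp : HasCompactSupport v)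
    (X Xt : EuclideanSpace ℝ (Fin d) → EuclideanSpace ℝ (Fin d))
    (hXdiff : ∀ x ∈ Ω, DifferentiableAt ℝ X x)
    (hXtdiff : ∀ x ∈ Ω, DifferentiableAt ℝ Xt x)
    (ε : ℝ) (hε : ∀ x ∈ Ω, ‖X x - Xt x‖ ≤ ε)
    (κ : ℝ) (hκ : 0 < κ)
    (hH : ∀ α ∈ Set.Icc (0 : ℝ) 1,
      Set.InjOn (fun x => X x + α • (Xt x - X x)) Ω ∧
      ∀ x ∈ Ω,
        κ ≤ |LinearMap.det (fderiv ℝ (fun x => X x + α • (Xt x - X x)) x).toLinearMap|) :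
    ∫ x in Ω, |v (X x) - v (Xt x)| ^ 2 ≤ ε ^ 2 * κ⁻¹ * ∫ y, ‖gradient v y‖ ^ 2 := by
  classical
  have hgradnn : (0:ℝ) ≤ ε ^ 2 * κ⁻¹ * ∫ y, ‖gradient v y‖ ^ 2 := by
    have : (0:ℝ) ≤ ∫ y, ‖gradient v y‖ ^ 2 := integral_nonneg fun y => by positivity
    positivity
  rcases Ω.eq_empty_or_nonempty with hΩe | ⟨x₀, hx₀⟩
  · rw [hΩe]; simpa using hgradnn
  have hε0 : 0 ≤ ε := le_trans (norm_nonneg _) (hε x₀ hx₀)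
  have hvdiff : Differentiable ℝ v := hv.differentiable one_ne_zero
  have hfc : Continuous (fderiv ℝ v) := hv.continuous_fderiv one_ne_zero
  have hng : ∀ y, ‖gradient v y‖ = ‖fderiv ℝ v y‖ := fun y =>
    LinearIsometryEquiv.norm_map _ (fderiv ℝ v y)
  have hGcont : Continuous (fun y : EuclideanSpace ℝ (Fin d) => ‖fderiv ℝ v y‖ ^ 2) :=
    (hfc.norm).pow 2
  have hGsupp : HasCompactSupport (fun y : EuclideanSpace ℝ (Fin d) => ‖fderiv ℝ v y‖ ^ 2) :=
    (hvsupp.fderiv ℝ).comp_left (g := fun z => ‖z‖ ^ 2) (by simp)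
  have hGint : Integrable (fun y : EuclideanSpace ℝ (Fin d) => ‖fderiv ℝ v y‖ ^ 2) :=
    hGcont.integrable_of_hasCompactSupport hGsupp
  have hGlt : ∫⁻ y, ENNReal.ofReal (‖fderiv ℝ v y‖ ^ 2) < ∞ := hGint.lintegral_lt_top
  have hκ0 : (ENNReal.ofReal κ) ≠ 0 := by
    simp [ENNReal.ofReal_eq_zero, not_le, hκ]
  -- Step 1: FTC along the segment
  have key1 : ∀ x ∈ Ω, |v (X x) - v (Xt x)| ≤
      ∫ t in (0:ℝ)..1, ε * ‖fderiv ℝ v (X x + t • (Xt x - X x))‖ := by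
    intro x hx
    set c := Xt x - X x with hc
    have hpc : Continuous fun t : ℝ => X x + t • c := by continuity
    have hp : ∀ t : ℝ, HasDerivAt (fun t : ℝ => X x + t • c) c t := by
      intro t
      have := ((hasDerivAt_id t).smul_const c).const_add (X x)
      simpa using this
    have hg : ∀ t : ℝ, HasDerivAt (fun t : ℝ => v (X x + t • c))
        (fderiv ℝ v (X x + t • c) c) t :=
      fun t => (hvdiff _).hasFDerivAt.comp_hasDerivAt t (hp t)
    have hcont : Continuous fun t : ℝ => fderiv ℝ v (X x + t • c) c :=
      (hfc.comp hpc).clm_apply continuous_const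
    have heq : ∫ t in (0:ℝ)..1, fderiv ℝ v (X x + t • c) c
        = v (X x + (1:ℝ) • c) - v (X x + (0:ℝ) • c) :=
      intervalIntegral.integral_eq_sub_of_hasDerivAt (fun t _ => hg t)
        (hcont.intervalIntegrable 0 1)
    have heq2 : v (Xt x) - v (X x) = ∫ t in (0:ℝ)..1, fderiv ℝ v (X x + t • c) c := by
      rw [heq]; simp [hc]
    have habs : |v (X x) - v (Xt x)| = |∫ t in (0:ℝ)..1, fderiv ℝ v (X x + t • c) c| := by
      rw [abs_sub_comm, heq2]
    rw [habs]
    calc |∫ t in (0:ℝ)..1, fderiv ℝ v (X x + t • c) c|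
        ≤ ∫ t in (0:ℝ)..1, |fderiv ℝ v (X x + t • c) c| :=
          intervalIntegral.abs_integral_le_integral_abs zero_le_one
      _ ≤ ∫ t in (0:ℝ)..1, ε * ‖fderiv ℝ v (X x + t • c)‖ := by
          refine intervalIntegral.integral_mono_on zero_le_one
            (hcont.abs.intervalIntegrable 0 1)
            ((continuous_const.mul (hfc.comp hpc).norm).intervalIntegrable 0 1)
            (fun t _ => ?_)
          have h1 : |fderiv ℝ v (X x + t • c) c| ≤ ‖fderiv ℝ v (X x + t • c)‖ * ‖c‖ := by
            simpa [Real.norm_eq_abs] using (fderiv ℝ v (X x + t • c)).le_opNorm c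
          have h2 : ‖c‖ ≤ ε := by rw [hc, norm_sub_rev]; exact hε x hx
          calc |fderiv ℝ v (X x + t • c) c| ≤ ‖fderiv ℝ v (X x + t • c)‖ * ‖c‖ := h1
            _ ≤ ‖fderiv ℝ v (X x + t • c)‖ * ε :=
                mul_le_mul_of_nonneg_left h2 (norm_nonneg _)
            _ = ε * ‖fderiv ℝ v (X x + t • c)‖ := mul_comm _ _
  -- Step 3: change of variables for each fixed t
  have key3 : ∀ t ∈ Set.Icc (0:ℝ) 1,
      ∫⁻ x in Ω, ENNReal.ofReal (‖fderiv ℝ v (X x + t • (Xt x - X x))‖ ^ 2)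
        ≤ (ENNReal.ofReal κ)⁻¹ * ∫⁻ y, ENNReal.ofReal (‖fderiv ℝ v y‖ ^ 2) := by
    intro t ht
    obtain ⟨hinj, hdet⟩ := hH t ht
    set f : EuclideanSpace ℝ (Fin d) → EuclideanSpace ℝ (Fin d) :=
      fun x => X x + t • (Xt x - X x) with hf
    have hfd : ∀ x ∈ Ω, HasFDerivWithinAt f (fderiv ℝ f x) Ω x := fun x hx =>
      (((hXdiff x hx).add
        (((hXtdiff x hx).sub (hXdiff x hx)).const_smul t)).hasFDerivAt).hasFDerivWithinAt
    have hcov := lintegral_image_eq_lintegral_abs_det_fderiv_mul (μ := volume)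
      hΩo.measurableSet hfd hinj (fun y => ENNReal.ofReal (‖fderiv ℝ v y‖ ^ 2))
    calc ∫⁻ x in Ω, ENNReal.ofReal (‖fderiv ℝ v (f x)‖ ^ 2)
        ≤ ∫⁻ x in Ω, (ENNReal.ofReal κ)⁻¹ *
            (ENNReal.ofReal |(fderiv ℝ f x).det| * ENNReal.ofReal (‖fderiv ℝ v (f x)‖ ^ 2)) := by
          refine lintegral_mono_ae ((ae_restrict_iff' hΩo.measurableSet).2
            (Filter.Eventually.of_forall fun x hx => ?_))
          have h1 : ENNReal.ofReal κ ≤ ENNReal.ofReal |(fderiv ℝ f x).det| :=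
            ENNReal.ofReal_le_ofReal (hdet x hx)
          have h2 : (ENNReal.ofReal κ)⁻¹ *
              (ENNReal.ofReal κ * ENNReal.ofReal (‖fderiv ℝ v (f x)‖ ^ 2)) ≤
              (ENNReal.ofReal κ)⁻¹ *
              (ENNReal.ofReal |(fderiv ℝ f x).det| *
                ENNReal.ofReal (‖fderiv ℝ v (f x)‖ ^ 2)) := by
            gcongr
          rwa [← mul_assoc, ENNReal.inv_mul_cancel hκ0 ENNReal.ofReal_ne_top, one_mul] at h2
      _ = (ENNReal.ofReal κ)⁻¹ * ∫⁻ x in Ω,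
            ENNReal.ofReal |(fderiv ℝ f x).det| * ENNReal.ofReal (‖fderiv ℝ v (f x)‖ ^ 2) :=
          lintegral_const_mul' _ _ (by simp [hκ])
      _ = (ENNReal.ofReal κ)⁻¹ * ∫⁻ y in f '' Ω, ENNReal.ofReal (‖fderiv ℝ v y‖ ^ 2) := by
          rw [hcov]
      _ ≤ (ENNReal.ofReal κ)⁻¹ * ∫⁻ y, ENNReal.ofReal (‖fderiv ℝ v y‖ ^ 2) :=
          mul_le_mul_right (setLIntegral_le_lintegral _ _) _
  -- measurability for Fubini
  have hXc : ContinuousOn X Ω := fun x hx => (hXdiff x hx).continuousAt.continuousWithinAt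
  have hXtc : ContinuousOn Xt Ω := fun x hx => (hXtdiff x hx).continuousAt.continuousWithinAt
  have hXaem : AEMeasurable X (volume.restrict Ω) := hXc.aemeasurable hΩo.measurableSet
  have hXtaem : AEMeasurable Xt (volume.restrict Ω) := hXtc.aemeasurable hΩo.measurableSet
  have hF₀m : Measurable (fun p : EuclideanSpace ℝ (Fin d) × ℝ =>
      ENNReal.ofReal (‖fderiv ℝ v (hXaem.mk X p.1 +
        p.2 • (hXtaem.mk Xt p.1 - hXaem.mk X p.1))‖ ^ 2)) := by
    apply ENNReal.measurable_ofReal.comp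
    apply hGcont.measurable.comp
    exact (hXaem.measurable_mk.comp measurable_fst).add
      (measurable_snd.smul ((hXtaem.measurable_mk.comp measurable_fst).sub
        (hXaem.measurable_mk.comp measurable_fst)))
  have hprodae : (fun p : EuclideanSpace ℝ (Fin d) × ℝ =>
        ENNReal.ofReal (‖fderiv ℝ v (X p.1 + p.2 • (Xt p.1 - X p.1))‖ ^ 2))
      =ᵐ[(volume.restrict Ω).prod (volume.restrict (Set.Ioc (0:ℝ) 1))]
      (fun p => ENNReal.ofReal (‖fderiv ℝ v (hXaem.mk X p.1 +
        p.2 • (hXtaem.mk Xt p.1 - hXaem.mk X p.1))‖ ^ 2)) := by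
    have hN : (volume.restrict Ω) {x | ¬ (X x = hXaem.mk X x ∧ Xt x = hXtaem.mk Xt x)} = 0 :=
      ae_iff.mp (hXaem.ae_eq_mk.and hXtaem.ae_eq_mk)
    rw [Filter.EventuallyEq, ae_iff]
    refine measure_mono_null
      (t := {x | ¬ (X x = hXaem.mk X x ∧ Xt x = hXtaem.mk Xt x)} ×ˢ (Set.univ : Set ℝ))
      (fun p hp => ?_) ?_
    · refine Set.mem_prod.2 ⟨?_, Set.mem_univ _⟩
      intro hcon
      exact hp (by simp only [Set.mem_setOf_eq] at hcon ⊢; rw [hcon.1, hcon.2])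
    · rw [Measure.prod_prod, hN, zero_mul]
  have hunc : AEMeasurable
      (Function.uncurry fun x t =>
        ENNReal.ofReal (‖fderiv ℝ v (X x + t • (Xt x - X x))‖ ^ 2))
      ((volume.restrict Ω).prod (volume.restrict (Set.Ioc (0:ℝ) 1))) :=
    ⟨_, hF₀m, hprodae⟩
  -- main chain in ℝ≥0∞
  have main : ∫⁻ x in Ω, ENNReal.ofReal (|v (X x) - v (Xt x)| ^ 2)
      ≤ ENNReal.ofReal ε ^ 2 *
        ((ENNReal.ofReal κ)⁻¹ * ∫⁻ y, ENNReal.ofReal (‖fderiv ℝ v y‖ ^ 2)) := by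
    calc ∫⁻ x in Ω, ENNReal.ofReal (|v (X x) - v (Xt x)| ^ 2)
        ≤ ∫⁻ x in Ω, ENNReal.ofReal ε ^ 2 * ∫⁻ t in Set.Ioc (0:ℝ) 1,
            ENNReal.ofReal (‖fderiv ℝ v (X x + t • (Xt x - X x))‖ ^ 2) := by
          refine lintegral_mono_ae ((ae_restrict_iff' hΩo.measurableSet).2
            (Filter.Eventually.of_forall fun x hx => ?_))
          exact aux_key2 hε0 ((hfc.comp (by continuity)).norm)
            (fun t => norm_nonneg _) (key1 x hx)
      _ = ENNReal.ofReal ε ^ 2 * ∫⁻ x in Ω, ∫⁻ t in Set.Ioc (0:ℝ) 1,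
            ENNReal.ofReal (‖fderiv ℝ v (X x + t • (Xt x - X x))‖ ^ 2) :=
          lintegral_const_mul' _ _ (ENNReal.pow_ne_top ENNReal.ofReal_ne_top)
      _ = ENNReal.ofReal ε ^ 2 * ∫⁻ t in Set.Ioc (0:ℝ) 1, ∫⁻ x in Ω,
            ENNReal.ofReal (‖fderiv ℝ v (X x + t • (Xt x - X x))‖ ^ 2) := by
          rw [lintegral_lintegral_swap hunc]
      _ ≤ ENNReal.ofReal ε ^ 2 * ∫⁻ _ in Set.Ioc (0:ℝ) 1,
            ((ENNReal.ofReal κ)⁻¹ * ∫⁻ y, ENNReal.ofReal (‖fderiv ℝ v y‖ ^ 2)) :=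
          mul_le_mul_right (lintegral_mono_ae ((ae_restrict_iff' measurableSet_Ioc).2
            (Filter.Eventually.of_forall fun t ht => key3 t (Set.Ioc_subset_Icc_self ht)))) _
      _ = ENNReal.ofReal ε ^ 2 *
            ((ENNReal.ofReal κ)⁻¹ * ∫⁻ y, ENNReal.ofReal (‖fderiv ℝ v y‖ ^ 2)) := by
          rw [lintegral_const, Measure.restrict_apply_univ, Real.volume_Ioc]
          simp
  -- convert to real integrals
  have hFaesm : AEStronglyMeasurable (fun x => |v (X x) - v (Xt x)| ^ 2) (volume.restrict Ω) :=
    ((((hv.continuous.comp_continuousOn hXc).sub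
      (hv.continuous.comp_continuousOn hXtc)).abs).pow 2).aestronglyMeasurable hΩo.measurableSet
  have hLHS : ∫ x in Ω, |v (X x) - v (Xt x)| ^ 2
      = (∫⁻ x in Ω, ENNReal.ofReal (|v (X x) - v (Xt x)| ^ 2)).toReal :=
    integral_eq_lintegral_of_nonneg_ae (Filter.Eventually.of_forall fun x => by positivity) hFaesm
  have hRHS : ∫ y, ‖gradient v y‖ ^ 2 = (∫⁻ y, ENNReal.ofReal (‖fderiv ℝ v y‖ ^ 2)).toReal := by
    simp_rw [hng]
    exact integral_eq_lintegral_of_nonneg_ae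
      (Filter.Eventually.of_forall fun y => by positivity) hGcont.aestronglyMeasurable
  rw [hLHS, hRHS]
  have hfin : ENNReal.ofReal ε ^ 2 *
      ((ENNReal.ofReal κ)⁻¹ * ∫⁻ y, ENNReal.ofReal (‖fderiv ℝ v y‖ ^ 2)) ≠ ∞ :=
    ENNReal.mul_ne_top (ENNReal.pow_ne_top ENNReal.ofReal_ne_top)
      (ENNReal.mul_ne_top (ENNReal.inv_ne_top.2 hκ0) hGlt.ne)
  calc (∫⁻ x in Ω, ENNReal.ofReal (|v (X x) - v (Xt x)| ^ 2)).toReal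
      ≤ (ENNReal.ofReal ε ^ 2 *
          ((ENNReal.ofReal κ)⁻¹ * ∫⁻ y, ENNReal.ofReal (‖fderiv ℝ v y‖ ^ 2))).toReal :=
        ENNReal.toReal_mono hfin main
    _ = ε ^ 2 * κ⁻¹ * (∫⁻ y, ENNReal.ofReal (‖fderiv ℝ v y‖ ^ 2)).toReal := by
        rw [ENNReal.toReal_mul, ENNReal.toReal_mul, ENNReal.toReal_pow,
          ENNReal.toReal_ofReal hε0, ENNReal.toReal_inv, ENNReal.toReal_ofReal hκ.le]
        ring
end

section
/- Let d ≥ 1, let T̂ ⊆ ℝ^d be a convex set, let B : ℝ^d → ℝ^d be an invertible linear map, b ∈ ℝ^d, c ∈ [0,1), and let Θ : ℝ^d → ℝ^d be differentiable on T̂ with ‖DΘ(x̂) ∘ B^{−1}‖ ≤ c for every x̂ ∈ T̂, where ‖·‖ is the operator norm. Define F(x̂) = B·x̂ + b + Θ(x̂), so that DF(x̂) = B + DΘ(x̂). Then for every x̂ ∈ T̂ the linear map DF(x̂) is invertible and (1 − c)^d·|det B| ≤ |det DF(x̂)| ≤ (1 + c)^d·|det B|. -/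
open Set

open MeasureTheory

lemma abs_det_le_pow_norm' {d : ℕ}
    (f : EuclideanSpace ℝ (Fin d) →L[ℝ] EuclideanSpace ℝ (Fin d)) :
    |LinearMap.det f.toLinearMap| ≤ ‖f‖ ^ d := by
  have himg : f '' Metric.ball 0 1 ⊆ Metric.closedBall 0 ‖f‖ := by
    rintro - ⟨x, hx, rfl⟩
    simp only [Metric.mem_ball, dist_zero_right] at hx
    simp only [Metric.mem_closedBall, dist_zero_right]
    calc ‖f x‖ ≤ ‖f‖ * ‖x‖ := f.le_opNorm x
    _ ≤ ‖f‖ * 1 := by nlinarith [norm_nonneg f]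
    _ = ‖f‖ := mul_one _
  have h1 : (volume : Measure (EuclideanSpace ℝ (Fin d))) (f '' Metric.ball 0 1)
      = ENNReal.ofReal |LinearMap.det f.toLinearMap| * volume (Metric.ball (0 : EuclideanSpace ℝ (Fin d)) 1) :=
    Measure.addHaar_image_continuousLinearMap _ f _
  have h2 : (volume : Measure (EuclideanSpace ℝ (Fin d))) (Metric.closedBall 0 ‖f‖)
      = ENNReal.ofReal (‖f‖ ^ d) * volume (Metric.ball (0 : EuclideanSpace ℝ (Fin d)) 1) := by
    rw [Measure.addHaar_closedBall volume 0 (norm_nonneg f), finrank_euclideanSpace_fin]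
  have h3 : ENNReal.ofReal |LinearMap.det f.toLinearMap| * volume (Metric.ball (0 : EuclideanSpace ℝ (Fin d)) 1)
      ≤ ENNReal.ofReal (‖f‖ ^ d) * volume (Metric.ball (0 : EuclideanSpace ℝ (Fin d)) 1) := by
    rw [← h1, ← h2]; exact measure_mono himg
  have hpos : volume (Metric.ball (0 : EuclideanSpace ℝ (Fin d)) 1) ≠ 0 :=
    (Metric.measure_ball_pos volume 0 one_pos).ne'
  have hfin : volume (Metric.ball (0 : EuclideanSpace ℝ (Fin d)) 1) ≠ ⊤ :=
    measure_ball_lt_top.ne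
  have := (ENNReal.mul_le_mul_iff_left hpos hfin).mp h3
  rwa [ENNReal.ofReal_le_ofReal_iff (pow_nonneg (norm_nonneg f) d)] at this

lemma one_add_det_bounds' {d : ℕ} {c : ℝ} (hc0 : 0 ≤ c) (hc1 : c < 1)
    (A : EuclideanSpace ℝ (Fin d) →L[ℝ] EuclideanSpace ℝ (Fin d)) (hA : ‖A‖ ≤ c) :
    Function.Bijective ⇑(1 + A) ∧
    (1 - c) ^ d ≤ |LinearMap.det (1 + A).toLinearMap| ∧
    |LinearMap.det (1 + A).toLinearMap| ≤ (1 + c) ^ d := by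
  have hc1' : (0 : ℝ) < 1 - c := by linarith
  have hA1 : ‖-A‖ < 1 := by rw [norm_neg]; exact lt_of_le_of_lt hA hc1
  set u := Units.oneSub (-A) hA1 with hudef
  have hu : (u : EuclideanSpace ℝ (Fin d) →L[ℝ] EuclideanSpace ℝ (Fin d)) = 1 + A := by
    rw [hudef, Units.val_oneSub, sub_neg_eq_add]
  have hleft : Function.LeftInverse ⇑(↑u⁻¹ : EuclideanSpace ℝ (Fin d) →L[ℝ] EuclideanSpace ℝ (Fin d)) ⇑(↑u : EuclideanSpace ℝ (Fin d) →L[ℝ] EuclideanSpace ℝ (Fin d)) := by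
    intro v
    rw [← ContinuousLinearMap.comp_apply, ← ContinuousLinearMap.mul_def, u.inv_mul,
      ContinuousLinearMap.one_apply]
  have hright : Function.RightInverse ⇑(↑u⁻¹ : EuclideanSpace ℝ (Fin d) →L[ℝ] EuclideanSpace ℝ (Fin d)) ⇑(↑u : EuclideanSpace ℝ (Fin d) →L[ℝ] EuclideanSpace ℝ (Fin d)) := by
    intro v
    rw [← ContinuousLinearMap.comp_apply, ← ContinuousLinearMap.mul_def, u.mul_inv,
      ContinuousLinearMap.one_apply]
  have hbij : Function.Bijective ⇑(1 + A) := by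
    rw [← hu]; exact ⟨hleft.injective, hright.surjective⟩
  have hnormu : ‖(1 + A : EuclideanSpace ℝ (Fin d) →L[ℝ] EuclideanSpace ℝ (Fin d))‖ ≤ 1 + c := by
    refine ContinuousLinearMap.opNorm_le_bound _ (by linarith) fun v => ?_
    have h1 : ‖A v‖ ≤ c * ‖v‖ := le_trans (A.le_opNorm v) (by nlinarith [norm_nonneg v])
    calc ‖(1 + A) v‖ = ‖v + A v‖ := by simp
    _ ≤ ‖v‖ + ‖A v‖ := norm_add_le _ _
    _ ≤ (1 + c) * ‖v‖ := by nlinarith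
  have hnormuinv : ‖(↑u⁻¹ : EuclideanSpace ℝ (Fin d) →L[ℝ] EuclideanSpace ℝ (Fin d))‖ ≤ (1 - c)⁻¹ := by
    refine ContinuousLinearMap.opNorm_le_bound _ (by positivity) fun v => ?_
    have hv : (↑u : EuclideanSpace ℝ (Fin d) →L[ℝ] EuclideanSpace ℝ (Fin d))
        ((↑u⁻¹ : EuclideanSpace ℝ (Fin d) →L[ℝ] EuclideanSpace ℝ (Fin d)) v) = v := hright v
    set w := (↑u⁻¹ : EuclideanSpace ℝ (Fin d) →L[ℝ] EuclideanSpace ℝ (Fin d)) v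
    have h1 : ‖A w‖ ≤ c * ‖w‖ := le_trans (A.le_opNorm w) (by nlinarith [norm_nonneg w])
    have h3 : ‖v‖ = ‖w + A w‖ := by rw [← hv, hu]; simp
    have h4 : ‖w‖ ≤ ‖w + A w‖ + ‖A w‖ := norm_le_add_norm_add w (A w)
    rw [inv_mul_eq_div, le_div_iff₀ hc1']
    nlinarith
  have hdetmul : LinearMap.det (↑u : EuclideanSpace ℝ (Fin d) →L[ℝ] EuclideanSpace ℝ (Fin d)).toLinearMap *
      LinearMap.det (↑u⁻¹ : EuclideanSpace ℝ (Fin d) →L[ℝ] EuclideanSpace ℝ (Fin d)).toLinearMap = 1 := by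
    rw [← LinearMap.det_comp, ← ContinuousLinearMap.toLinearMap_comp, ← ContinuousLinearMap.mul_def,
      u.mul_inv, ContinuousLinearMap.one_def, ContinuousLinearMap.coe_id, LinearMap.det_id]
  have hup : |LinearMap.det (1 + A : EuclideanSpace ℝ (Fin d) →L[ℝ] EuclideanSpace ℝ (Fin d)).toLinearMap| ≤ (1 + c) ^ d :=
    le_trans (abs_det_le_pow_norm' _) (pow_le_pow_left₀ (norm_nonneg _) hnormu d)
  have huinv : |LinearMap.det (↑u⁻¹ : EuclideanSpace ℝ (Fin d) →L[ℝ] EuclideanSpace ℝ (Fin d)).toLinearMap| ≤ ((1 - c) ^ d)⁻¹ := by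
    refine le_trans (abs_det_le_pow_norm' _) ?_
    rw [← inv_pow]
    exact pow_le_pow_left₀ (norm_nonneg _) hnormuinv d
  refine ⟨hbij, ?_, hup⟩
  rw [← hu] at hup ⊢
  have h1 : |LinearMap.det (↑u : EuclideanSpace ℝ (Fin d) →L[ℝ] EuclideanSpace ℝ (Fin d)).toLinearMap| *
      |LinearMap.det (↑u⁻¹ : EuclideanSpace ℝ (Fin d) →L[ℝ] EuclideanSpace ℝ (Fin d)).toLinearMap| = 1 := by
    rw [← abs_mul, hdetmul, abs_one]
  have hp : (0:ℝ) < (1 - c) ^ d := pow_pos hc1' d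
  have hbne : |LinearMap.det (↑u⁻¹ : EuclideanSpace ℝ (Fin d) →L[ℝ] EuclideanSpace ℝ (Fin d)).toLinearMap| ≠ 0 := by
    intro h0; rw [h0, mul_zero] at h1; exact zero_ne_one h1
  have hbpos : 0 < |LinearMap.det (↑u⁻¹ : EuclideanSpace ℝ (Fin d) →L[ℝ] EuclideanSpace ℝ (Fin d)).toLinearMap| :=
    lt_of_le_of_ne (abs_nonneg _) (Ne.symm hbne)
  nlinarith [mul_le_mul_of_nonneg_left huinv hp.le, mul_inv_cancel₀ hp.ne']

/-- **Jacobian determinant bounds for a perturbed affine map (curved simplices).**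
If `F(x̂) = B·x̂ + b + Θ(x̂)` with `B` invertible and `Θ` differentiable on the convex
set `T̂` with `‖DΘ(x̂) ∘ B⁻¹‖ ≤ c < 1`, so that `DF(x̂) = B + DΘ(x̂)`, then for every
`x̂ ∈ T̂` the map `DF(x̂)` is invertible and
`(1 − c)^d·|det B| ≤ |det DF(x̂)| ≤ (1 + c)^d·|det B|`. -/
theorem curved_simplex_map_jacobian_det_bounds
    {d : ℕ} (hd : 1 ≤ d)
    (Tref : Set (EuclideanSpace ℝ (Fin d))) (hconv : Convex ℝ Tref)
    (B : EuclideanSpace ℝ (Fin d) ≃L[ℝ] EuclideanSpace ℝ (Fin d))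
    (b : EuclideanSpace ℝ (Fin d)) (c : ℝ) (hc0 : 0 ≤ c) (hc1 : c < 1)
    (Θ : EuclideanSpace ℝ (Fin d) → EuclideanSpace ℝ (Fin d))
    (DΘ : EuclideanSpace ℝ (Fin d) →
      (EuclideanSpace ℝ (Fin d) →L[ℝ] EuclideanSpace ℝ (Fin d)))
    (hΘ : ∀ x ∈ Tref, HasFDerivWithinAt Θ (DΘ x) Tref x)
    (hDΘ : ∀ x ∈ Tref,
      ‖(DΘ x).comp (B.symm : EuclideanSpace ℝ (Fin d) →L[ℝ] EuclideanSpace ℝ (Fin d))‖ ≤ c) :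
    ∀ x ∈ Tref,
      Function.Bijective
        ⇑((B : EuclideanSpace ℝ (Fin d) →L[ℝ] EuclideanSpace ℝ (Fin d)) + DΘ x) ∧
      (1 - c) ^ d *
          |LinearMap.det
            (B : EuclideanSpace ℝ (Fin d) →L[ℝ] EuclideanSpace ℝ (Fin d)).toLinearMap| ≤
        |LinearMap.det
          ((B : EuclideanSpace ℝ (Fin d) →L[ℝ] EuclideanSpace ℝ (Fin d)) +
            DΘ x).toLinearMap| ∧
      |LinearMap.det
          ((B : EuclideanSpace ℝ (Fin d) →L[ℝ] EuclideanSpace ℝ (Fin d)) +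
            DΘ x).toLinearMap| ≤
        (1 + c) ^ d *
          |LinearMap.det
            (B : EuclideanSpace ℝ (Fin d) →L[ℝ] EuclideanSpace ℝ (Fin d)).toLinearMap| := by
  
  intro x hx
  set E : EuclideanSpace ℝ (Fin d) →L[ℝ] EuclideanSpace ℝ (Fin d) :=
    (DΘ x).comp (B.symm : EuclideanSpace ℝ (Fin d) →L[ℝ] EuclideanSpace ℝ (Fin d)) with hEdef
  have hEc : ‖E‖ ≤ c := hDΘ x hx
  obtain ⟨hbij1, hlo1, hhi1⟩ := one_add_det_bounds' hc0 hc1 E hEc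
  have hcomp : E.comp (B : EuclideanSpace ℝ (Fin d) →L[ℝ] EuclideanSpace ℝ (Fin d)) = DΘ x := by
    rw [hEdef, ContinuousLinearMap.comp_assoc]
    have h0 : (B.symm : EuclideanSpace ℝ (Fin d) →L[ℝ] EuclideanSpace ℝ (Fin d)).comp
        (B : EuclideanSpace ℝ (Fin d) →L[ℝ] EuclideanSpace ℝ (Fin d)) =
        ContinuousLinearMap.id ℝ (EuclideanSpace ℝ (Fin d)) := by
      ext v; simp
    rw [h0, ContinuousLinearMap.comp_id]
  have hdecomp : (B : EuclideanSpace ℝ (Fin d) →L[ℝ] EuclideanSpace ℝ (Fin d)) + DΘ x =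
      (1 + E).comp (B : EuclideanSpace ℝ (Fin d) →L[ℝ] EuclideanSpace ℝ (Fin d)) := by
    rw [ContinuousLinearMap.add_comp, hcomp, ContinuousLinearMap.one_def,
      ContinuousLinearMap.id_comp]
  have hbij : Function.Bijective
      ⇑((B : EuclideanSpace ℝ (Fin d) →L[ℝ] EuclideanSpace ℝ (Fin d)) + DΘ x) := by
    rw [hdecomp, ContinuousLinearMap.coe_comp']
    exact hbij1.comp B.bijective
  have hdet : |LinearMap.det ((B : EuclideanSpace ℝ (Fin d) →L[ℝ] EuclideanSpace ℝ (Fin d)) +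
        DΘ x).toLinearMap| =
      |LinearMap.det (1 + E).toLinearMap| *
        |LinearMap.det (B : EuclideanSpace ℝ (Fin d) →L[ℝ] EuclideanSpace ℝ (Fin d)).toLinearMap| := by
    rw [hdecomp, ← abs_mul, ← LinearMap.det_comp, ContinuousLinearMap.toLinearMap_comp]
  refine ⟨hbij, ?_, ?_⟩
  · rw [hdet]
    exact mul_le_mul_of_nonneg_right hlo1 (abs_nonneg _)
  · rw [hdet]
    exact mul_le_mul_of_nonneg_right hhi1 (abs_nonneg _)
end

section
/- Let d ≥ 1, let T̂ ⊆ ℝ^d be a compact convex set with positive Lebesgue measure, let B : ℝ^d → ℝ^d be an invertible linear map, b ∈ ℝ^d, c ∈ [0,1), and let Θ : ℝ^d → ℝ^d be continuously differentiable on an open set containing T̂ with ‖DΘ(x̂) ∘ B^{−1}‖ ≤ c for every x̂ ∈ T̂. Define F(x̂) = B·x̂ + b + Θ(x̂) and T = F(T̂). Then sup_{x̂∈T̂} |det DF(x̂)| ≤ (1/meas(T̂))·((1 + c)/(1 − c))^d·meas(T), where meas denotes Lebesgue measure on ℝ^d. -/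
open Set MeasureTheory


lemma aux_abs_det_le_norm_pow {d : ℕ}
    (f : EuclideanSpace ℝ (Fin d) →L[ℝ] EuclideanSpace ℝ (Fin d)) :
    |LinearMap.det (f : EuclideanSpace ℝ (Fin d) →ₗ[ℝ] EuclideanSpace ℝ (Fin d))| ≤ ‖f‖ ^ d := by
  set E := EuclideanSpace ℝ (Fin d)
  have himg : volume (f '' Metric.closedBall (0:E) 1)
      = ENNReal.ofReal |LinearMap.det (f : E →ₗ[ℝ] E)| * volume (Metric.closedBall (0:E) 1) :=
    MeasureTheory.Measure.addHaar_image_continuousLinearMap _ f _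
  have hsub : f '' Metric.closedBall (0:E) 1 ⊆ Metric.closedBall (0:E) ‖f‖ := by
    rintro y ⟨x, hx, rfl⟩
    rw [Metric.mem_closedBall, dist_zero_right] at *
    calc ‖f x‖ ≤ ‖f‖ * ‖x‖ := f.le_opNorm x
      _ ≤ ‖f‖ * 1 := by
          exact mul_le_mul_of_nonneg_left hx (norm_nonneg f)
      _ = ‖f‖ := mul_one _
  have h1 : volume (Metric.closedBall (0:E) 1)
      = ENNReal.ofReal ((1:ℝ) ^ Module.finrank ℝ E) * volume (Metric.ball (0:E) 1) :=
    MeasureTheory.Measure.addHaar_closedBall _ _ zero_le_one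
  have h2 : volume (Metric.closedBall (0:E) ‖f‖)
      = ENNReal.ofReal (‖f‖ ^ Module.finrank ℝ E) * volume (Metric.ball (0:E) 1) :=
    MeasureTheory.Measure.addHaar_closedBall _ _ (norm_nonneg f)
  have hrank : Module.finrank ℝ E = d := finrank_euclideanSpace_fin
  have hVpos : 0 < volume (Metric.ball (0:E) 1) := Metric.measure_ball_pos _ _ one_pos
  have hVfin : volume (Metric.ball (0:E) 1) ≠ ⊤ := measure_ball_lt_top.ne
  have key : ENNReal.ofReal |LinearMap.det (f : E →ₗ[ℝ] E)| * volume (Metric.ball (0:E) 1)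
      ≤ ENNReal.ofReal (‖f‖ ^ d) * volume (Metric.ball (0:E) 1) := by
    calc ENNReal.ofReal |LinearMap.det (f : E →ₗ[ℝ] E)| * volume (Metric.ball (0:E) 1)
        = volume (f '' Metric.closedBall (0:E) 1) := by
          rw [himg, h1, hrank]; simp
      _ ≤ volume (Metric.closedBall (0:E) ‖f‖) := measure_mono hsub
      _ = ENNReal.ofReal (‖f‖ ^ d) * volume (Metric.ball (0:E) 1) := by rw [h2, hrank]
  have := (ENNReal.mul_le_mul_iff_left hVpos.ne' hVfin).mp key
  rw [ENNReal.ofReal_le_ofReal_iff (by positivity)] at this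
  exact this

lemma aux_det_one_add_ge {d : ℕ} {c : ℝ} (hc1 : c < 1)
    (t : EuclideanSpace ℝ (Fin d) →L[ℝ] EuclideanSpace ℝ (Fin d)) (ht : ‖t‖ ≤ c) :
    (1 - c) ^ d ≤
      |LinearMap.det ((1 + t : EuclideanSpace ℝ (Fin d) →L[ℝ] EuclideanSpace ℝ (Fin d)) :
        EuclideanSpace ℝ (Fin d) →ₗ[ℝ] EuclideanSpace ℝ (Fin d))| := by
  set E := EuclideanSpace ℝ (Fin d)
  have hc0 : (0:ℝ) ≤ c := le_trans (norm_nonneg t) ht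
  have hnt : ‖(-t : E →L[ℝ] E)‖ < 1 := by rw [norm_neg]; exact lt_of_le_of_lt ht hc1
  set u : (E →L[ℝ] E)ˣ := Units.oneSub (-t) hnt with hu
  have huval : (u : E →L[ℝ] E) = 1 + t := by
    rw [hu, Units.val_oneSub, sub_neg_eq_add]
  -- norm bound on the inverse
  have hsum : Summable (fun n : ℕ => ‖(-t : E →L[ℝ] E) ^ n‖) :=
    summable_norm_geometric_of_norm_lt_one hnt
  have hinvnorm : ‖((u⁻¹ : (E →L[ℝ] E)ˣ) : E →L[ℝ] E)‖ ≤ (1 - c)⁻¹ := by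
    have hinv : ((u⁻¹ : (E →L[ℝ] E)ˣ) : E →L[ℝ] E) = ∑' n : ℕ, (-t : E →L[ℝ] E) ^ n := rfl
    rw [hinv]
    calc ‖∑' n : ℕ, (-t : E →L[ℝ] E) ^ n‖ ≤ ∑' n : ℕ, ‖(-t : E →L[ℝ] E) ^ n‖ :=
          norm_tsum_le_tsum_norm hsum
      _ ≤ ∑' n : ℕ, c ^ n := by
          refine hsum.tsum_le_tsum (fun n => ?_) (summable_geometric_of_lt_one hc0 hc1)
          rcases Nat.eq_zero_or_pos n with hn | hn
          · simp only [hn, pow_zero]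
            exact ContinuousLinearMap.norm_id_le
          · calc ‖(-t : E →L[ℝ] E) ^ n‖ ≤ ‖(-t : E →L[ℝ] E)‖ ^ n := norm_pow_le' _ hn
              _ ≤ c ^ n := by
                  refine pow_le_pow_left₀ (norm_nonneg _) ?_ n
                  rw [norm_neg]; exact ht
      _ = (1 - c)⁻¹ := tsum_geometric_of_lt_one hc0 hc1
  -- determinant multiplicativity
  have hdetmul : LinearMap.det ((1 + t : E →L[ℝ] E) : E →ₗ[ℝ] E) *
      LinearMap.det (((u⁻¹ : (E →L[ℝ] E)ˣ) : E →L[ℝ] E) : E →ₗ[ℝ] E) = 1 := by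
    rw [← LinearMap.det_comp]
    have : (((1 + t : E →L[ℝ] E) : E →ₗ[ℝ] E)).comp
        (((u⁻¹ : (E →L[ℝ] E)ˣ) : E →L[ℝ] E) : E →ₗ[ℝ] E)
        = ((((1 + t : E →L[ℝ] E)) * ((u⁻¹ : (E →L[ℝ] E)ˣ) : E →L[ℝ] E) : E →L[ℝ] E) :
          E →ₗ[ℝ] E) := rfl
    rw [this, ← huval, u.mul_inv]
    rw [show ((1 : E →L[ℝ] E) : E →ₗ[ℝ] E) = LinearMap.id from rfl, LinearMap.det_id]
  set a := |LinearMap.det ((1 + t : E →L[ℝ] E) : E →ₗ[ℝ] E)|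
  set b := |LinearMap.det (((u⁻¹ : (E →L[ℝ] E)ˣ) : E →L[ℝ] E) : E →ₗ[ℝ] E)|
  have hab : a * b = 1 := by rw [← abs_mul, hdetmul, abs_one]
  have hb_le : b ≤ ((1 - c)⁻¹) ^ d :=
    le_trans (aux_abs_det_le_norm_pow _) (pow_le_pow_left₀ (norm_nonneg _) hinvnorm d)
  have hb0 : b ≠ 0 := fun h0 => by simp [h0] at hab
  have hbpos : 0 < b := lt_of_le_of_ne (abs_nonneg _) (Ne.symm hb0)
  have h1c : (0:ℝ) < 1 - c := by linarith
  have hMpos : (0:ℝ) < ((1 - c)⁻¹) ^ d := by positivity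
  have ha : a = b⁻¹ := by field_simp at hab ⊢; linarith [hab]
  rw [ha]
  calc (1 - c) ^ d = (((1 - c)⁻¹) ^ d)⁻¹ := by rw [← inv_pow, inv_inv]
    _ ≤ b⁻¹ := by exact inv_anti₀ hbpos hb_le

/-- **Jacobian supremum bound via the measure of the image (curved simplices).**
If `F(x̂) = B·x̂ + b + Θ(x̂)` with `B` invertible and `Θ` of class `C¹` on an open set
containing the compact convex set `T̂` of positive measure, with
`‖DΘ(x̂) ∘ B⁻¹‖ ≤ c < 1` on `T̂`, then
`sup_{x̂ ∈ T̂} |det DF(x̂)| ≤ (1/meas T̂)·((1 + c)/(1 − c))^d·meas (F '' T̂)`. -/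
theorem curved_simplex_jacobian_sup_le_measure_ratio
    {d : ℕ} (hd : 1 ≤ d)
    (Tref : Set (EuclideanSpace ℝ (Fin d)))
    (hcomp : IsCompact Tref) (hconv : Convex ℝ Tref)
    (hmeas : 0 < volume Tref)
    (B : EuclideanSpace ℝ (Fin d) ≃L[ℝ] EuclideanSpace ℝ (Fin d))
    (b : EuclideanSpace ℝ (Fin d)) (c : ℝ) (hc0 : 0 ≤ c) (hc1 : c < 1)
    (Θ : EuclideanSpace ℝ (Fin d) → EuclideanSpace ℝ (Fin d))
    (U : Set (EuclideanSpace ℝ (Fin d))) (hUo : IsOpen U) (hTU : Tref ⊆ U)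
    (hΘ : ContDiffOn ℝ 1 Θ U)
    (hDΘ : ∀ x ∈ Tref,
      ‖(fderiv ℝ Θ x).comp
        (B.symm : EuclideanSpace ℝ (Fin d) →L[ℝ] EuclideanSpace ℝ (Fin d))‖ ≤ c) :
    ∀ x ∈ Tref,
      |LinearMap.det (fderiv ℝ (fun z => B z + b + Θ z) x).toLinearMap| ≤
        (volume Tref).toReal⁻¹ * ((1 + c) / (1 - c)) ^ d *
          (volume ((fun z => B z + b + Θ z) '' Tref)).toReal := by
  intro x hx
  set F : EuclideanSpace ℝ (Fin d) → EuclideanSpace ℝ (Fin d) :=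
    fun z => B z + b + Θ z with hFdef
  set F' : EuclideanSpace ℝ (Fin d) →
      (EuclideanSpace ℝ (Fin d) →L[ℝ] EuclideanSpace ℝ (Fin d)) :=
    fun y => (B : EuclideanSpace ℝ (Fin d) →L[ℝ] EuclideanSpace ℝ (Fin d)) + fderiv ℝ Θ y
    with hF'def
  have h1c : (0:ℝ) < 1 - c := by linarith
  -- differentiability
  have hΘd : ∀ y ∈ U, HasFDerivAt Θ (fderiv ℝ Θ y) y := fun y hy =>
    (((hΘ.differentiableOn one_ne_zero) y hy).differentiableAt (hUo.mem_nhds hy)).hasFDerivAt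
  have hFd : ∀ y ∈ U, HasFDerivAt F (F' y) y := by
    intro y hy
    have h1 : HasFDerivAt (fun z : EuclideanSpace ℝ (Fin d) => B z + b)
        (B : EuclideanSpace ℝ (Fin d) →L[ℝ] EuclideanSpace ℝ (Fin d)) y :=
      B.hasFDerivAt.add_const b
    exact h1.add (hΘd y hy)
  -- factorization of the derivative
  have hfact : ∀ y, F' y =
      ((1 : EuclideanSpace ℝ (Fin d) →L[ℝ] EuclideanSpace ℝ (Fin d)) +
        (fderiv ℝ Θ y).comp
          (B.symm : EuclideanSpace ℝ (Fin d) →L[ℝ] EuclideanSpace ℝ (Fin d))).comp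
        (B : EuclideanSpace ℝ (Fin d) →L[ℝ] EuclideanSpace ℝ (Fin d)) := by
    intro y; ext z
    simp [hF'def, ContinuousLinearMap.add_apply, ContinuousLinearMap.comp_apply,
      ContinuousLinearMap.one_apply]
  set K : ℝ := |LinearMap.det
    ((B : EuclideanSpace ℝ (Fin d) →L[ℝ] EuclideanSpace ℝ (Fin d)) :
      EuclideanSpace ℝ (Fin d) →ₗ[ℝ] EuclideanSpace ℝ (Fin d))| with hKdef
  have hK0 : 0 ≤ K := abs_nonneg _
  have hdet : ∀ y, |LinearMap.det ((F' y) :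
      EuclideanSpace ℝ (Fin d) →ₗ[ℝ] EuclideanSpace ℝ (Fin d))| =
      |LinearMap.det ((((1 : EuclideanSpace ℝ (Fin d) →L[ℝ] EuclideanSpace ℝ (Fin d)) +
        (fderiv ℝ Θ y).comp
          (B.symm : EuclideanSpace ℝ (Fin d) →L[ℝ] EuclideanSpace ℝ (Fin d))) :
        EuclideanSpace ℝ (Fin d) →L[ℝ] EuclideanSpace ℝ (Fin d)) :
        EuclideanSpace ℝ (Fin d) →ₗ[ℝ] EuclideanSpace ℝ (Fin d))| * K := by
    intro y
    rw [hfact y, ContinuousLinearMap.toLinearMap_comp, LinearMap.det_comp, abs_mul]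
  -- upper and lower determinant bounds
  have hup : ∀ y ∈ Tref, |LinearMap.det ((F' y) :
      EuclideanSpace ℝ (Fin d) →ₗ[ℝ] EuclideanSpace ℝ (Fin d))| ≤ (1 + c) ^ d * K := by
    intro y hy
    rw [hdet y]
    refine mul_le_mul_of_nonneg_right ?_ hK0
    refine le_trans (aux_abs_det_le_norm_pow _) ?_
    refine pow_le_pow_left₀ (norm_nonneg _) ?_ d
    calc ‖(1 : EuclideanSpace ℝ (Fin d) →L[ℝ] EuclideanSpace ℝ (Fin d)) +
          (fderiv ℝ Θ y).comp
            (B.symm : EuclideanSpace ℝ (Fin d) →L[ℝ] EuclideanSpace ℝ (Fin d))‖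
        ≤ ‖(1 : EuclideanSpace ℝ (Fin d) →L[ℝ] EuclideanSpace ℝ (Fin d))‖ +
          ‖(fderiv ℝ Θ y).comp
            (B.symm : EuclideanSpace ℝ (Fin d) →L[ℝ] EuclideanSpace ℝ (Fin d))‖ :=
          norm_add_le _ _
      _ ≤ 1 + c := add_le_add ContinuousLinearMap.norm_id_le (hDΘ y hy)
  have hlo : ∀ y ∈ Tref, (1 - c) ^ d * K ≤ |LinearMap.det ((F' y) :
      EuclideanSpace ℝ (Fin d) →ₗ[ℝ] EuclideanSpace ℝ (Fin d))| := by
    intro y hy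
    rw [hdet y]
    exact mul_le_mul_of_nonneg_right (aux_det_one_add_ge hc1 _ (hDΘ y hy)) hK0
  -- injectivity of F on Tref
  have hinj : InjOn F Tref := by
    have hSconv : Convex ℝ (⇑B '' Tref) := hconv.linear_image
      (B.toLinearEquiv : EuclideanSpace ℝ (Fin d) →ₗ[ℝ] EuclideanSpace ℝ (Fin d))
    set G : EuclideanSpace ℝ (Fin d) → EuclideanSpace ℝ (Fin d) :=
      fun z => Θ (B.symm z) with hGdef
    set G' : EuclideanSpace ℝ (Fin d) →
        (EuclideanSpace ℝ (Fin d) →L[ℝ] EuclideanSpace ℝ (Fin d)) :=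
      fun z => (fderiv ℝ Θ (B.symm z)).comp
        (B.symm : EuclideanSpace ℝ (Fin d) →L[ℝ] EuclideanSpace ℝ (Fin d)) with hG'def
    have hGd : ∀ z ∈ ⇑B '' Tref, HasFDerivWithinAt G (G' z) (⇑B '' Tref) z := by
      rintro z ⟨w, hw, rfl⟩
      have h1 : HasFDerivAt Θ (fderiv ℝ Θ (B.symm (B w))) (B.symm (B w)) := by
        rw [B.symm_apply_apply]; exact hΘd w (hTU hw)
      exact ((h1.comp (B w) B.symm.hasFDerivAt)).hasFDerivWithinAt
    have hGbound : ∀ z ∈ ⇑B '' Tref, ‖G' z‖ ≤ c := by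
      rintro z ⟨w, hw, rfl⟩
      rw [hG'def]
      simp only [B.symm_apply_apply]
      exact hDΘ w hw
    intro x1 hx1 x2 hx2 hxy
    have h3 : B x1 + b + Θ x1 = B x2 + b + Θ x2 := hxy
    have h2 : B x1 - B x2 = Θ x2 - Θ x1 := by
      calc B x1 - B x2 = (B x1 + b + Θ x1) - (B x2 + b) - Θ x1 := by abel
        _ = (B x2 + b + Θ x2) - (B x2 + b) - Θ x1 := by rw [h3]
        _ = Θ x2 - Θ x1 := by abel
    have hGlip : ‖G (B x2) - G (B x1)‖ ≤ c * ‖B x2 - B x1‖ :=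
      hSconv.norm_image_sub_le_of_norm_hasFDerivWithin_le hGd hGbound
        (mem_image_of_mem _ hx1) (mem_image_of_mem _ hx2)
    have hGeq : G (B x2) - G (B x1) = Θ x2 - Θ x1 := by
      simp [hGdef, B.symm_apply_apply]
    have hkey : ‖B x1 - B x2‖ ≤ c * ‖B x1 - B x2‖ := by
      calc ‖B x1 - B x2‖ = ‖Θ x2 - Θ x1‖ := by rw [h2]
        _ = ‖G (B x2) - G (B x1)‖ := by rw [hGeq]
        _ ≤ c * ‖B x2 - B x1‖ := hGlip
        _ = c * ‖B x1 - B x2‖ := by rw [norm_sub_rev]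
    have hB0 : ‖B x1 - B x2‖ = 0 := by nlinarith [norm_nonneg (B x1 - B x2)]
    have : B x1 = B x2 := by
      rwa [norm_sub_eq_zero_iff] at hB0
    exact B.injective this
  -- change of variables inequality
  have hsm : MeasurableSet Tref := hcomp.isClosed.measurableSet
  have hfd' : ∀ y ∈ Tref, HasFDerivWithinAt F (F' y) Tref y := fun y hy =>
    (hFd y (hTU hy)).hasFDerivWithinAt
  have hkey := lintegral_abs_det_fderiv_le_addHaar_image volume hsm hfd' hinj
  have hconst : ENNReal.ofReal ((1 - c) ^ d * K) * volume Tref ≤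
      ∫⁻ y in Tref, ENNReal.ofReal |(F' y).det| ∂volume := by
    rw [← setLIntegral_const]
    refine lintegral_mono_ae ?_
    filter_upwards [ae_restrict_mem hsm] with y hy
    exact ENNReal.ofReal_le_ofReal (hlo y hy)
  have hchain : ENNReal.ofReal ((1 - c) ^ d * K) * volume Tref ≤ volume (F '' Tref) :=
    le_trans hconst hkey
  -- finiteness
  have hTfin : volume Tref ≠ ⊤ := hcomp.measure_lt_top.ne
  have hFcont : ContinuousOn F Tref := fun y hy =>
    (hFd y (hTU hy)).continuousAt.continuousWithinAt
  have himgfin : volume (F '' Tref) ≠ ⊤ :=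
    (hcomp.image_of_continuousOn hFcont).measure_lt_top.ne
  set vT : ℝ := (volume Tref).toReal with hvTdef
  set M : ℝ := (volume (F '' Tref)).toReal with hMdef
  have hnn : (0:ℝ) ≤ (1 - c) ^ d * K := mul_nonneg (pow_nonneg h1c.le d) hK0
  have hreal : (1 - c) ^ d * K * vT ≤ M := by
    have h := ENNReal.toReal_mono himgfin hchain
    rwa [ENNReal.toReal_mul, ENNReal.toReal_ofReal hnn] at h
  have hvT : 0 < vT := ENNReal.toReal_pos hmeas.ne' hTfin
  have hdiv : (1 - c) ^ d * K ≤ M / vT := (le_div_iff₀ hvT).mpr hreal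
  have hfx : fderiv ℝ F x = F' x := (hFd x (hTU hx)).fderiv
  rw [hfx]
  have hq : (0:ℝ) ≤ ((1 + c) / (1 - c)) ^ d :=
    pow_nonneg (div_nonneg (by linarith) h1c.le) d
  calc |LinearMap.det ((F' x) :
        EuclideanSpace ℝ (Fin d) →ₗ[ℝ] EuclideanSpace ℝ (Fin d))|
      ≤ (1 + c) ^ d * K := hup x hx
    _ = ((1 + c) / (1 - c)) ^ d * ((1 - c) ^ d * K) := by
        rw [div_pow]; field_simp
    _ ≤ ((1 + c) / (1 - c)) ^ d * (M / vT) := mul_le_mul_of_nonneg_left hdiv hq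
    _ = vT⁻¹ * ((1 + c) / (1 - c)) ^ d * M := by
        rw [div_eq_mul_inv]; ring
end
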